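/- Let δ be an isotropic vector for the symmetric bilinear form of a quiver Q ((δ,δ) = 0 and (δ, ε_k) = 0 for all k), extended to Q' by a framing vertex ∞ attached by one arrow to a vertex 0 with δ_0 = 1. If ε_∞ + nδ = β⁽¹⁾ + ⋯ + β⁽ʳ⁾ with each β⁽ᵗ⁾ a positive root of Q', then Σ_t p'(β⁽ᵗ⁾) ≤ n = p'(ε_∞ + nδ), with equality exactly when all but one of the β⁽ᵗ⁾ equal δ. -/

import Mathlib

/-- The symmetrized Ringel form `(α,β) = ⟨α,β⟩ + ⟨β,α⟩` of a quiver with head and tail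
maps `hd, tl : A → I`. -/
def ringelSym {I A : Type} [Fintype I] [Fintype A] (hd tl : A → I)
    (x y : I → ℤ) : ℤ :=
  2 * ∑ i : I, x i * y i - ∑ a : A, (x (tl a) * y (hd a) + x (hd a) * y (tl a))

/-- `p(α) = 1 − (1/2)(α,α)`. -/
def pQ {I A : Type} [Fintype I] [Fintype A] (hd tl : A → I) (x : I → ℤ) : ℚ :=
  1 - (ringelSym hd tl x x : ℚ) / 2

/-- The coordinate vector `ε_i`. -/
def coordVec {I : Type} [DecidableEq I] (i : I) : I → ℤ :=
  fun j => if j = i then 1 else 0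

/-- The vertex `i` is loopfree. -/
def loopfreeV {I A : Type} (hd tl : A → I) (i : I) : Prop :=
  ∀ a : A, ¬(hd a = i ∧ tl a = i)

/-- The reflection `s_i(α) = α − (α, ε_i) ε_i` at a vertex `i`. -/
def reflectQ {I A : Type} [Fintype I] [Fintype A] [DecidableEq I]
    (hd tl : A → I) (i : I) (x : I → ℤ) : I → ℤ :=
  x - ringelSym hd tl x (coordVec i) • coordVec i

/-- The support of `x` is connected in the quiver. -/
def suppConnected {I A : Type} (hd tl : A → I) (x : I → ℤ) : Prop :=
  ∀ j k : I, x j ≠ 0 → x k ≠ 0 →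
    Relation.ReflTransGen
      (fun u v => x u ≠ 0 ∧ x v ≠ 0 ∧
        ∃ a : A, (hd a = u ∧ tl a = v) ∨ (hd a = v ∧ tl a = u)) j k

/-- `x` lies in the fundamental region: nonzero, nonnegative, connected support, and
`(x, ε_i) ≤ 0` for every vertex `i`. -/
def inFundamental {I A : Type} [Fintype I] [Fintype A] [DecidableEq I]
    (hd tl : A → I) (x : I → ℤ) : Prop :=
  x ≠ 0 ∧ (∀ i, 0 ≤ x i) ∧ suppConnected hd tl x ∧
    ∀ i : I, ringelSym hd tl x (coordVec i) ≤ 0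

/-- Real roots: obtained from coordinate vectors at loopfree vertices by sequences of
reflections at loopfree vertices. -/
inductive IsRealRoot {I A : Type} [Fintype I] [Fintype A] [DecidableEq I]
    (hd tl : A → I) : (I → ℤ) → Prop
  | coord (i : I) : loopfreeV hd tl i → IsRealRoot hd tl (coordVec i)
  | refl (i : I) (x : I → ℤ) : loopfreeV hd tl i → IsRealRoot hd tl x →
      IsRealRoot hd tl (reflectQ hd tl i x)

/-- Imaginary roots: obtained from `±(fundamental region)` by sequences of reflections at
loopfree vertices. -/
inductive IsImagRoot {I A : Type} [Fintype I] [Fintype A] [DecidableEq I]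
    (hd tl : A → I) : (I → ℤ) → Prop
  | fund (x : I → ℤ) : inFundamental hd tl x ∨ inFundamental hd tl (-x) →
      IsImagRoot hd tl x
  | refl (i : I) (x : I → ℤ) : loopfreeV hd tl i → IsImagRoot hd tl x →
      IsImagRoot hd tl (reflectQ hd tl i x)

/-- Roots of the quiver. -/
def IsRoot {I A : Type} [Fintype I] [Fintype A] [DecidableEq I]
    (hd tl : A → I) (x : I → ℤ) : Prop :=
  IsRealRoot hd tl x ∨ IsImagRoot hd tl x

/-- Positive roots. -/
def IsPosRoot {I A : Type} [Fintype I] [Fintype A] [DecidableEq I]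
    (hd tl : A → I) (x : I → ℤ) : Prop :=
  IsRoot hd tl x ∧ (∀ i, 0 ≤ x i) ∧ x ≠ 0

section Aux

variable {I A : Type} [Fintype I] [Fintype A] [DecidableEq I]

/-- The (integral) Tits quadratic form. -/
def qZ (hd tl : A → I) (x : I → ℤ) : ℤ :=
  ∑ i : I, x i ^ 2 - ∑ a : A, x (hd a) * x (tl a)

lemma ringel_self (hd tl : A → I) (x : I → ℤ) :
    ringelSym hd tl x x = 2 * qZ hd tl x := by
  simp only [ringelSym, qZ, mul_sub]
  congr 1
  · rw [Finset.mul_sum, Finset.mul_sum]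
    exact Finset.sum_congr rfl fun i _ => by ring
  · rw [Finset.mul_sum]
    exact Finset.sum_congr rfl fun a _ => by ring

lemma pQ_eq (hd tl : A → I) (x : I → ℤ) :
    pQ hd tl x = ((1 - qZ hd tl x : ℤ) : ℚ) := by
  rw [pQ, ringel_self]
  push_cast
  ring

lemma neighbor_sum_int (hd tl : A → I) (δ : I → ℤ)
    (hiso : ∀ k : I, ringelSym hd tl δ (coordVec k) = 0) (k : I) :
    (∑ a : A, ((if hd a = k then δ (tl a) else 0) + (if tl a = k then δ (hd a) else 0)))
      = 2 * δ k := by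
  have h := hiso k
  simp only [ringelSym, coordVec, mul_ite, mul_one, mul_zero,
    Finset.sum_ite_eq', Finset.mem_univ, if_true] at h
  omega

lemma neighbor_sum (hd tl : A → I) (δ : I → ℤ)
    (hiso : ∀ k : I, ringelSym hd tl δ (coordVec k) = 0) (f : I → ℚ) :
    ∑ a : A, (f (hd a) * (δ (tl a) : ℚ) + f (tl a) * (δ (hd a) : ℚ))
      = ∑ i : I, 2 * (δ i : ℚ) * f i := by
  have key : ∀ i : I, (2 : ℚ) * (δ i : ℚ) * f i =
      ∑ a : A, (((if hd a = i then (δ (tl a) : ℚ) else 0)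
        + (if tl a = i then (δ (hd a) : ℚ) else 0)) * f i) := by
    intro i
    have h := neighbor_sum_int hd tl δ hiso i
    have h' : ((∑ a : A, ((if hd a = i then δ (tl a) else 0)
        + (if tl a = i then δ (hd a) else 0)) : ℤ) : ℚ) = ((2 * δ i : ℤ) : ℚ) := by
      exact_mod_cast congrArg (fun z : ℤ => (z : ℚ)) h
    push_cast at h'
    rw [← Finset.sum_mul, h']
  rw [Finset.sum_congr rfl fun i _ => key i, Finset.sum_comm]
  refine Finset.sum_congr rfl fun a _ => ?_
  simp only [add_mul, ite_mul, zero_mul, Finset.sum_add_distrib, Finset.sum_ite_eq,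
    Finset.mem_univ, if_true]
  ring

variable (hd tl : A → I) (δ : I → ℤ)

lemma two_qZ_eq (hδpos : ∀ i, 1 ≤ δ i)
    (hiso : ∀ k : I, ringelSym hd tl δ (coordVec k) = 0) (x : I → ℤ) :
    2 * (qZ hd tl x : ℚ) = ∑ a : A, (δ (hd a) : ℚ) * (δ (tl a) : ℚ) *
      ((x (hd a) : ℚ) / (δ (hd a) : ℚ) - (x (tl a) : ℚ) / (δ (tl a) : ℚ)) ^ 2 := by
  have hne : ∀ i, (δ i : ℚ) ≠ 0 := fun i => by
    have := hδpos i; positivity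
  have per : ∀ a : A, (δ (hd a) : ℚ) * (δ (tl a) : ℚ) *
      ((x (hd a) : ℚ) / (δ (hd a) : ℚ) - (x (tl a) : ℚ) / (δ (tl a) : ℚ)) ^ 2
      = ((x (hd a) : ℚ) ^ 2 / (δ (hd a) : ℚ)) * (δ (tl a) : ℚ)
        + ((x (tl a) : ℚ) ^ 2 / (δ (tl a) : ℚ)) * (δ (hd a) : ℚ)
        - 2 * ((x (hd a) : ℚ) * (x (tl a) : ℚ)) := by
    intro a
    have h1 := hne (hd a)
    have h2 := hne (tl a)
    field_simp
    ring
  rw [Finset.sum_congr rfl fun a _ => per a, Finset.sum_sub_distrib,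
    neighbor_sum hd tl δ hiso (fun i => (x i : ℚ) ^ 2 / (δ i : ℚ))]
  have : ∀ i : I, 2 * (δ i : ℚ) * ((x i : ℚ) ^ 2 / (δ i : ℚ)) = 2 * (x i : ℚ) ^ 2 := by
    intro i
    have h := hne i
    field_simp
  rw [Finset.sum_congr rfl fun i _ => this i]
  simp only [qZ]
  push_cast
  rw [mul_sub, Finset.mul_sum, Finset.mul_sum]

lemma qZ_nonneg (hδpos : ∀ i, 1 ≤ δ i)
    (hiso : ∀ k : I, ringelSym hd tl δ (coordVec k) = 0) (x : I → ℤ) :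
    0 ≤ qZ hd tl x := by
  have h := two_qZ_eq hd tl δ hδpos hiso x
  have hnn : (0:ℚ) ≤ 2 * (qZ hd tl x : ℚ) := by
    rw [h]
    refine Finset.sum_nonneg fun a _ => ?_
    have h1 : (0:ℚ) ≤ (δ (hd a) : ℚ) := by have := hδpos (hd a); positivity
    have h2 : (0:ℚ) ≤ (δ (tl a) : ℚ) := by have := hδpos (tl a); positivity
    positivity
  have : (0:ℚ) ≤ (qZ hd tl x : ℚ) := by linarith
  exact_mod_cast this

lemma qZ_eq_zero_delta (hδpos : ∀ i, 1 ≤ δ i)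
    (hiso : ∀ k : I, ringelSym hd tl δ (coordVec k) = 0)
    (hconn : ∀ j k : I, Relation.ReflTransGen
      (fun u v => ∃ a : A, (hd a = u ∧ tl a = v) ∨ (hd a = v ∧ tl a = u)) j k)
    (i0 : I) (hδ0 : δ i0 = 1) (x : I → ℤ) (hx : qZ hd tl x = 0) :
    ∀ j, x j = x i0 * δ j := by
  have hne : ∀ i, (δ i : ℚ) ≠ 0 := fun i => by
    have := hδpos i; positivity
  have h := two_qZ_eq hd tl δ hδpos hiso x
  rw [hx] at h
  have hall : ∀ a ∈ (Finset.univ : Finset A), (δ (hd a) : ℚ) * (δ (tl a) : ℚ) *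
      ((x (hd a) : ℚ) / (δ (hd a) : ℚ) - (x (tl a) : ℚ) / (δ (tl a) : ℚ)) ^ 2 = 0 := by
    refine (Finset.sum_eq_zero_iff_of_nonneg fun a _ => ?_).1 (by simpa using h.symm)
    have h1 : (0:ℚ) ≤ (δ (hd a) : ℚ) := by have := hδpos (hd a); positivity
    have h2 : (0:ℚ) ≤ (δ (tl a) : ℚ) := by have := hδpos (tl a); positivity
    positivity
  have hedge : ∀ a : A, (x (hd a) : ℚ) / (δ (hd a) : ℚ) = (x (tl a) : ℚ) / (δ (tl a) : ℚ) := by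
    intro a
    have := hall a (Finset.mem_univ a)
    have hm : (δ (hd a) : ℚ) * (δ (tl a) : ℚ) ≠ 0 := mul_ne_zero (hne _) (hne _)
    have := (mul_eq_zero.1 this).resolve_left hm
    have := pow_eq_zero_iff (n := 2) (by norm_num) |>.1 this
    linarith [sub_eq_zero.1 this]
  have hconst : ∀ j k : I, (x j : ℚ) / (δ j : ℚ) = (x k : ℚ) / (δ k : ℚ) := by
    intro j k
    induction hconn j k with
    | refl => rfl
    | tail _ hbc ih =>
      obtain ⟨a, hcase⟩ := hbc
      rcases hcase with ⟨h1, h2⟩ | ⟨h1, h2⟩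
      · rw [ih, ← h1, ← h2, hedge a]
      · rw [ih, ← h1, ← h2, hedge a]
  intro j
  have hj0 := hconst j i0
  rw [hδ0] at hj0
  norm_num at hj0
  rw [div_eq_iff (hne j)] at hj0
  exact_mod_cast hj0

lemma qZ_mul_delta (hδpos : ∀ i, 1 ≤ δ i)
    (hiso : ∀ k : I, ringelSym hd tl δ (coordVec k) = 0) (c : ℤ) :
    qZ hd tl (fun i => c * δ i) = 0 := by
  have hne : ∀ i, (δ i : ℚ) ≠ 0 := fun i => by
    have := hδpos i; positivity
  have h := two_qZ_eq hd tl δ hδpos hiso (fun i => c * δ i)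
  have : ∀ a : A, (δ (hd a) : ℚ) * (δ (tl a) : ℚ) *
      (((c * δ (hd a) : ℤ) : ℚ) / (δ (hd a) : ℚ) - ((c * δ (tl a) : ℤ) : ℚ) / (δ (tl a) : ℚ)) ^ 2 = 0 := by
    intro a
    have e1 : ((c * δ (hd a) : ℤ) : ℚ) / (δ (hd a) : ℚ) = (c : ℚ) := by
      push_cast
      rw [mul_div_assoc, div_self (hne (hd a)), mul_one]
    have e2 : ((c * δ (tl a) : ℤ) : ℚ) / (δ (tl a) : ℚ) = (c : ℚ) := by
      push_cast
      rw [mul_div_assoc, div_self (hne (tl a)), mul_one]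
    rw [e1, e2]
    ring
  rw [Finset.sum_congr rfl fun a _ => this a] at h
  simp at h
  exact_mod_cast h

end Aux

section AuxPrime

variable {I A : Type} [Fintype I] [Fintype A] [DecidableEq I]

lemma qZ_prime (hd tl : A → I) (i0 : I) (x : Option I → ℤ) :
    qZ (Sum.elim (fun a => some (hd a)) (fun _ : Unit => some i0))
       (Sum.elim (fun a => some (tl a)) (fun _ : Unit => (none : Option I))) x
    = x none ^ 2 + qZ hd tl (fun i => x (some i)) - x (some i0) * x none := by
  simp only [qZ, Fintype.sum_option, Fintype.sum_sum_type, Sum.elim_inl, Sum.elim_inr,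
    Finset.univ_unique, Finset.sum_singleton]
  ring

end AuxPrime

lemma sum_split {m : ℕ} (t1 : Fin m) (f : Fin m → ℤ) :
    ∑ t : Fin m, f t = f t1 + ∑ s ∈ Finset.univ.erase t1, f s :=
  (Finset.add_sum_erase _ f (Finset.mem_univ t1)).symm

/-- Let `Q` be a connected loopfree extended Dynkin quiver with minimal positive
imaginary root `δ` (`δ` is positive, isotropic — `(δ, ε_k) = 0` for all `k` — and minimal
among positive radical vectors), and let `Q'` be obtained by adjoining a framing vertex
`∞` with a single arrow from `∞` to an extending vertex `0` (so `δ_0 = 1`).  If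
`ε_∞ + nδ = β⁽¹⁾ + ⋯ + β⁽ʳ⁾` with each `β⁽ᵗ⁾` a positive root of `Q'`, then
`Σ_t p'(β⁽ᵗ⁾) ≤ n = p'(ε_∞ + nδ)`, with equality exactly when all but one of the
`β⁽ᵗ⁾` equal `δ`. -/
theorem sum_p_le_n_of_root_decomposition
    {I A : Type} [Fintype I] [Fintype A] [DecidableEq I]
    (hd tl : A → I)
    (hloopfree : ∀ a : A, hd a ≠ tl a)
    (hconn : ∀ j k : I, Relation.ReflTransGen
      (fun u v => ∃ a : A, (hd a = u ∧ tl a = v) ∨ (hd a = v ∧ tl a = u)) j k)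
    (δ : I → ℤ) (hδpos : ∀ i, 1 ≤ δ i)
    (hiso : ∀ k : I, ringelSym hd tl δ (coordVec k) = 0)
    (hmin : ∀ x : I → ℤ, (∀ i, 0 ≤ x i) → x ≠ 0 →
      (∀ k : I, ringelSym hd tl x (coordVec k) = 0) → ∀ i, δ i ≤ x i)
    (i0 : I) (hδ0 : δ i0 = 1)
    (n r : ℕ) (β : Fin r → (Option I → ℤ))
    (hroot : ∀ t : Fin r,
      IsPosRoot (Sum.elim (fun a => some (hd a)) (fun _ : Unit => some i0))
        (Sum.elim (fun a => some (tl a)) (fun _ : Unit => (none : Option I))) (β t))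
    (hsum : ∑ t : Fin r, β t =
      coordVec (none : Option I) + n • fun v => v.elim 0 δ) :
    (∑ t : Fin r,
        pQ (Sum.elim (fun a => some (hd a)) (fun _ : Unit => some i0))
          (Sum.elim (fun a => some (tl a)) (fun _ : Unit => (none : Option I))) (β t))
      ≤ n ∧
    ((∑ t : Fin r,
        pQ (Sum.elim (fun a => some (hd a)) (fun _ : Unit => some i0))
          (Sum.elim (fun a => some (tl a)) (fun _ : Unit => (none : Option I))) (β t))
      = n ↔ ∃ t0 : Fin r, ∀ s : Fin r, s ≠ t0 → β s = fun v => v.elim 0 δ) := by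
  set hd' : A ⊕ Unit → Option I :=
    Sum.elim (fun a => some (hd a)) (fun _ : Unit => some i0) with hhd'
  set tl' : A ⊕ Unit → Option I :=
    Sum.elim (fun a => some (tl a)) (fun _ : Unit => (none : Option I)) with htl'
  have qprime : ∀ x : Option I → ℤ, qZ hd' tl' x
      = x none ^ 2 + qZ hd tl (fun i => x (some i)) - x (some i0) * x none :=
    fun x => qZ_prime hd tl i0 x
  have hnn : ∀ t v, 0 ≤ β t v := fun t => (hroot t).2.1
  have hnz : ∀ t, β t ≠ 0 := fun t => (hroot t).2.2
  have hsum_none : ∑ t : Fin r, β t none = 1 := by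
    have h := congrFun hsum none
    simpa [coordVec, Finset.sum_apply] using h
  have hsum_some : ∀ i : I, ∑ t : Fin r, β t (some i) = (n : ℤ) * δ i := by
    intro i
    have h := congrFun hsum (some i)
    simpa [coordVec, Finset.sum_apply, mul_comm] using h
  have hex : ∃ t, β t none ≠ 0 := by
    by_contra hc
    push_neg at hc
    simp [hc] at hsum_none
  obtain ⟨t1, ht1⟩ := hex
  set E : Finset (Fin r) := Finset.univ.erase t1 with hE
  have hsplit : β t1 none + ∑ s ∈ E, β s none = 1 := by
    have h2 := sum_split t1 (fun s => β s none)
    beta_reduce at h2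
    rw [← hE] at h2
    omega
  have hrest_nonneg : (0:ℤ) ≤ ∑ s ∈ E, β s none :=
    Finset.sum_nonneg fun s _ => hnn s none
  have ht1nn := hnn t1 none
  have ht1one : β t1 none = 1 := by omega
  have hzero : ∀ s ∈ E, β s none = 0 := by
    have hz : ∑ s ∈ E, β s none = 0 := by omega
    exact fun s hs => (Finset.sum_eq_zero_iff_of_nonneg fun s _ => hnn s none).1 hz s hs
  have hq't1 : qZ hd' tl' (β t1)
      = 1 + qZ hd tl (fun i => β t1 (some i)) - β t1 (some i0) := by
    rw [qprime (β t1), ht1one]; ring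
  have hq's : ∀ s ∈ E, qZ hd' tl' (β s) = qZ hd tl (fun i => β s (some i)) := by
    intro s hs
    rw [qprime (β s), hzero s hs]; ring
  have hsum_split_pq : ∑ t : Fin r, pQ hd' tl' (β t)
      = ((∑ t : Fin r, (1 - qZ hd' tl' (β t)) : ℤ) : ℚ) := by
    simp only [pQ_eq]
    push_cast
    rfl
  set N : ℤ := ∑ t : Fin r, (1 - qZ hd' tl' (β t)) with hN
  have hNsplit : N = (1 - qZ hd' tl' (β t1)) + ∑ s ∈ E, (1 - qZ hd' tl' (β s)) := by
    have h2 := sum_split t1 (fun t => 1 - qZ hd' tl' (β t))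
    beta_reduce at h2
    rw [← hE] at h2
    rw [hN, h2]
  have hsum_i0 : β t1 (some i0) + ∑ s ∈ E, β s (some i0) = (n : ℤ) := by
    have h2 := sum_split t1 (fun t => β t (some i0))
    beta_reduce at h2
    rw [← hE] at h2
    have h3 := hsum_some i0
    rw [hδ0, mul_one] at h3
    omega
  have key : (n : ℤ) - N = qZ hd tl (fun i => β t1 (some i))
      + ∑ s ∈ E, (qZ hd tl (fun i => β s (some i)) + β s (some i0) - 1) := by
    rw [hNsplit, hq't1,
      Finset.sum_congr rfl (fun s hs => by rw [hq's s hs] :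
        ∀ s ∈ E, 1 - qZ hd' tl' (β s) = 1 - qZ hd tl (fun i => β s (some i)))]
    simp only [Finset.sum_sub_distrib, Finset.sum_add_distrib]
    linarith [hsum_i0]
  have hbq : ∀ s, 0 ≤ qZ hd tl (fun i => β s (some i)) :=
    fun s => qZ_nonneg hd tl δ hδpos hiso _
  have hqγ : 0 ≤ qZ hd tl (fun i => β t1 (some i)) := hbq t1
  have hcnn : ∀ s ∈ E, 0 ≤ qZ hd tl (fun i => β s (some i)) + β s (some i0) - 1 := by
    intro s hs
    have hq := hbq s
    have hd0 := hnn s (some i0)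
    by_cases h0 : qZ hd tl (fun i => β s (some i)) = 0
    · have hdel := qZ_eq_zero_delta hd tl δ hδpos hiso hconn i0 hδ0 _ h0
      have hpos : 1 ≤ β s (some i0) := by
        rcases eq_or_lt_of_le hd0 with h | h
        · exfalso
          apply hnz s
          funext v
          cases v with
          | none => exact hzero s hs
          | some j =>
            have := hdel j
            rw [this, ← h, zero_mul]
            rfl
        · omega
      omega
    · omega
  have hineq : N ≤ (n : ℤ) := by
    have h1 : 0 ≤ ∑ s ∈ E, (qZ hd tl (fun i => β s (some i)) + β s (some i0) - 1) :=
      Finset.sum_nonneg hcnn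
    linarith [key]
  constructor
  · rw [hsum_split_pq]
    exact_mod_cast hineq
  constructor
  · -- equality → all but one equal δ
    intro heq
    have hNn : N = (n : ℤ) := by
      rw [hsum_split_pq] at heq
      exact_mod_cast heq
    have h1 : 0 ≤ ∑ s ∈ E, (qZ hd tl (fun i => β s (some i)) + β s (some i0) - 1) :=
      Finset.sum_nonneg hcnn
    have hγ0 : qZ hd tl (fun i => β t1 (some i)) = 0 := by linarith [key]
    have hcs0 : ∀ s ∈ E, qZ hd tl (fun i => β s (some i)) + β s (some i0) - 1 = 0 := by
      have hz : ∑ s ∈ E, (qZ hd tl (fun i => β s (some i)) + β s (some i0) - 1) = 0 := by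
        linarith [key]
      exact fun s hs => (Finset.sum_eq_zero_iff_of_nonneg hcnn).1 hz s hs
    have hγ : ∀ j, β t1 (some j) = β t1 (some i0) * δ j :=
      qZ_eq_zero_delta hd tl δ hδpos hiso hconn i0 hδ0 _ hγ0
    have hcase : ∀ s ∈ E, (∀ j, β s (some j) = β s (some i0) * δ j)
        ∨ β s (some i0) = 0 := by
      intro s hs
      by_cases h0 : qZ hd tl (fun i => β s (some i)) = 0
      · exact Or.inl (qZ_eq_zero_delta hd tl δ hδpos hiso hconn i0 hδ0 _ h0)
      · right
        have := hcs0 s hs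
        have := hbq s
        have := hnn s (some i0)
        omega
    have hterm : ∀ j : I, ∀ s ∈ E, β s (some j) = β s (some i0) * δ j := by
      intro j
      have e1 : ∑ s ∈ E, β s (some j) = (n:ℤ) * δ j - β t1 (some j) := by
        have h2 := sum_split t1 (fun t => β t (some j))
        beta_reduce at h2
        rw [← hE] at h2
        have h3 := hsum_some j
        linarith
      have hsumj : ∑ s ∈ E, (β s (some j) - β s (some i0) * δ j) = 0 := by
        rw [Finset.sum_sub_distrib, ← Finset.sum_mul, e1]
        have e2 : ∑ s ∈ E, β s (some i0) = (n:ℤ) - β t1 (some i0) := by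
          linarith [hsum_i0]
        rw [e2, hγ j]
        ring
      have hge : ∀ s ∈ E, 0 ≤ β s (some j) - β s (some i0) * δ j := by
        intro s hs
        rcases hcase s hs with h | h
        · rw [h j]; simp
        · rw [h, zero_mul, sub_zero]
          exact hnn s (some j)
      intro s hs
      have := (Finset.sum_eq_zero_iff_of_nonneg hge).1 hsumj s hs
      omega
    refine ⟨t1, fun s hsne => ?_⟩
    have hsE : s ∈ E := Finset.mem_erase.2 ⟨hsne, Finset.mem_univ s⟩
    have hi0pos : 1 ≤ β s (some i0) := by
      rcases eq_or_lt_of_le (hnn s (some i0)) with h | h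
      · exfalso
        apply hnz s
        funext v
        cases v with
        | none => exact hzero s hsE
        | some j =>
          have := hterm j s hsE
          rw [this, ← h, zero_mul]
          rfl
      · omega
    have hi0one : β s (some i0) = 1 := by
      have := hcs0 s hsE
      have := hbq s
      omega
    funext v
    cases v with
    | none => exact hzero s hsE
    | some j =>
      have := hterm j s hsE
      rw [this, hi0one, one_mul]
      rfl
  · -- all but one equal δ → equality
    rintro ⟨t0, hall⟩
    have ht0 : t0 = t1 := by
      by_contra hne
      have h := hall t1 (fun hc => hne hc.symm)
      have : β t1 none = 0 := by rw [h]; rfl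
      omega
    have hall' : ∀ s : Fin r, s ≠ t1 → β s = fun v => v.elim 0 δ := by
      intro s hs
      exact hall s (by rw [ht0]; exact hs)
    have hbs : ∀ s ∈ E, (fun i => β s (some i)) = fun i => (1:ℤ) * δ i := by
      intro s hs
      have h := hall' s (Finset.mem_erase.1 hs).1
      funext j
      rw [h]
      simp
    have hcs0 : ∀ s ∈ E, qZ hd tl (fun i => β s (some i)) + β s (some i0) - 1 = 0 := by
      intro s hs
      have h := hall' s (Finset.mem_erase.1 hs).1
      rw [hbs s hs, qZ_mul_delta hd tl δ hδpos hiso 1]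
      have : β s (some i0) = δ i0 := by rw [h]; rfl
      rw [this, hδ0]
      ring
    have hγeq : (fun i => β t1 (some i)) = fun i => ((n:ℤ) - E.card) * δ i := by
      funext j
      have h2 : β t1 (some j) + ∑ s ∈ E, β s (some j) = (n:ℤ) * δ j := by
        have h2' := sum_split t1 (fun t => β t (some j))
        beta_reduce at h2'
        rw [← hE] at h2'
        have h3 := hsum_some j
        linarith
      have hEsum : ∑ s ∈ E, β s (some j) = (E.card : ℤ) * δ j := by
        rw [Finset.sum_congr rfl (fun s hs => congrFun (hbs s hs) j :
          ∀ s ∈ E, β s (some j) = 1 * δ j)]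
        rw [Finset.sum_const, one_mul, nsmul_eq_mul]
      rw [sub_mul]
      rw [hEsum] at h2
      linarith
    have hγ0 : qZ hd tl (fun i => β t1 (some i)) = 0 := by
      rw [hγeq]
      exact qZ_mul_delta hd tl δ hδpos hiso _
    have hNn : N = (n : ℤ) := by
      have hcsum : ∑ s ∈ E, (qZ hd tl (fun i => β s (some i)) + β s (some i0) - 1) = 0 :=
        Finset.sum_eq_zero hcs0
      linarith [key]
    rw [hsum_split_pq, hNn]
    push_cast
    rfl
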